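/- Let A|B|C be a left depth three tower of rings with left D3 quasibases β_j ∈ End_C A_B and t_j ∈ (A ⊗_B A)^C satisfying x ⊗_B y = Σ_j t_j β_j(x) y for all x,y ∈ A. Then the map A ⊗_V End_C A_B → End A_B given by a ⊗ α ↦ λ_a ∘ α (left multiplication by a composed with α) is an isomorphism of abelian groups, with inverse f ↦ Σ_j f(t_j¹)t_j² ⊗_V β_j. -/

import Mathlib

open scoped BigOperators

section BTCore

variable {R M N P : Type*} [AddCommGroup M] [AddCommGroup N] [AddCommGroup P]

/-- Relations defining the balanced tensor product of `M` and `N` over the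
"scalars" `R`, where `R` acts on the right of `M` via `rho` and on the left of
`N` via `lam`. -/
inductive BTRel (rho : R → M →+ M) (lam : R → N →+ N) :
    FreeAbelianGroup (M × N) → FreeAbelianGroup (M × N) → Prop
  | addl (m m' : M) (n : N) :
      BTRel rho lam (FreeAbelianGroup.of (m + m', n))
        (FreeAbelianGroup.of (m, n) + FreeAbelianGroup.of (m', n))
  | addr (m : M) (n n' : N) :
      BTRel rho lam (FreeAbelianGroup.of (m, n + n'))
        (FreeAbelianGroup.of (m, n) + FreeAbelianGroup.of (m, n'))
  | bal (r : R) (m : M) (n : N) :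
      BTRel rho lam (FreeAbelianGroup.of (rho r m, n))
        (FreeAbelianGroup.of (m, lam r n))

/-- The balanced tensor product `M ⊗_R N`. -/
def BT (rho : R → M →+ M) (lam : R → N →+ N) : Type _ :=
  (addConGen (BTRel rho lam)).Quotient

namespace BT

variable {rho : R → M →+ M} {lam : R → N →+ N}

instance : AddGroup (BT rho lam) :=
  inferInstanceAs (AddGroup (addConGen (BTRel rho lam)).Quotient)

instance : AddCommGroup (BT rho lam) :=
  { (inferInstance : AddGroup (BT rho lam)) with
    add_comm := fun a b => by
      refine AddCon.induction_on₂ a b fun x y => ?_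
      change ((x + y : FreeAbelianGroup (M × N)) :
        (addConGen (BTRel rho lam)).Quotient) = ((y + x : FreeAbelianGroup (M × N)) : _)
      rw [add_comm] }

/-- The canonical generator `m ⊗ n`. -/
def mk (rho : R → M →+ M) (lam : R → N →+ N) (m : M) (n : N) : BT rho lam :=
  ((FreeAbelianGroup.of (m, n) : FreeAbelianGroup (M × N)) :
    (addConGen (BTRel rho lam)).Quotient)

lemma mk_rel {x y : FreeAbelianGroup (M × N)} (h : BTRel rho lam x y) :
    (x : (addConGen (BTRel rho lam)).Quotient) = (y : _) :=
  (AddCon.eq _).2 (AddConGen.Rel.of _ _ h)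

lemma mk_add_left (m m' : M) (n : N) :
    mk rho lam (m + m') n = mk rho lam m n + mk rho lam m' n := by
  have := mk_rel (BTRel.addl m m' n (rho := rho) (lam := lam))
  exact this

lemma mk_add_right (m : M) (n n' : N) :
    mk rho lam m (n + n') = mk rho lam m n + mk rho lam m n' := by
  have := mk_rel (BTRel.addr m n n' (rho := rho) (lam := lam))
  exact this

lemma mk_bal (r : R) (m : M) (n : N) :
    mk rho lam (rho r m) n = mk rho lam m (lam r n) :=
  mk_rel (BTRel.bal r m n)

/-- Lift a biadditive balanced map to the balanced tensor product. -/
def lift (rho : R → M →+ M) (lam : R → N →+ N) (φ : M → N → P)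
    (h1 : ∀ m m' n, φ (m + m') n = φ m n + φ m' n)
    (h2 : ∀ m n n', φ m (n + n') = φ m n + φ m n')
    (h3 : ∀ r m n, φ (rho r m) n = φ m (lam r n)) : BT rho lam →+ P :=
  AddCon.lift _ (FreeAbelianGroup.lift fun p => φ p.1 p.2)
    (AddCon.addConGen_le.2 (by
      rintro x y h
      cases h with
      | addl m m' n => simp [AddCon.ker_rel, FreeAbelianGroup.lift_apply_of, h1]
      | addr m n n' => simp [AddCon.ker_rel, FreeAbelianGroup.lift_apply_of, h2]
      | bal r m n => simp [AddCon.ker_rel, FreeAbelianGroup.lift_apply_of, h3]))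

@[simp] lemma lift_mk (φ : M → N → P) (h1 h2 h3) (m : M) (n : N) :
    lift rho lam φ h1 h2 h3 (mk rho lam m n) = φ m n := by
  show (addConGen (BTRel rho lam)).lift _ _ ((FreeAbelianGroup.of (m, n) :
    FreeAbelianGroup (M × N)) : (addConGen (BTRel rho lam)).Quotient) = _
  rw [AddCon.lift_coe, FreeAbelianGroup.lift_apply_of]

/-- Induction principle for the balanced tensor product. -/
protected lemma ind {motive : BT rho lam → Prop} (zero : motive 0)
    (mk' : ∀ m n, motive (mk rho lam m n)) (neg : ∀ x, motive x → motive (-x))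
    (add : ∀ x y, motive x → motive y → motive (x + y)) : ∀ x : BT rho lam, motive x := by
  intro x
  refine AddCon.induction_on x fun z => ?_
  induction z using FreeAbelianGroup.induction_on with
  | zero => exact zero
  | of p => exact mk' p.1 p.2
  | neg p h =>
      have : ((-FreeAbelianGroup.of p : FreeAbelianGroup (M × N)) :
          (addConGen (BTRel rho lam)).Quotient) = -(mk rho lam p.1 p.2) := rfl
      rw [this]; exact neg _ (mk' p.1 p.2)
  | add x y hx hy =>
      have : ((x + y : FreeAbelianGroup (M × N)) :
          (addConGen (BTRel rho lam)).Quotient) = (x : _) + (y : _) := rfl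
      rw [this]; exact add _ _ hx hy

lemma hom_ext {f g : BT rho lam →+ P}
    (h : ∀ m n, f (mk rho lam m n) = g (mk rho lam m n)) : f = g := by
  ext x
  refine BT.ind (motive := fun x => f x = g x) ?_ ?_ ?_ ?_ x
  · simp
  · exact h
  · intro y hy; simp [hy]
  · intro y z hy hz; simp [hy, hz]

end BT

end BTCore

section Tensor

variable {B A C P : Type*} [Ring B] [Ring A] [Ring C] [AddCommGroup P]

/-- The tensor product `A ⊗_B A` relative to a ring homomorphism `g : B →+* A`. -/
def Tsr (g : B →+* A) : Type _ :=
  BT (fun b => AddMonoidHom.mulRight (g b)) (fun b => AddMonoidHom.mulLeft (g b))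

instance (g : B →+* A) : AddCommGroup (Tsr g) := inferInstanceAs (AddCommGroup (BT _ _))

namespace Tsr

variable (g : B →+* A)

/-- The generator `x ⊗_B y` of `Tsr g`. -/
def tmk (x y : A) : Tsr g := BT.mk _ _ x y

lemma tmk_add_left (x x' y : A) : tmk g (x + x') y = tmk g x y + tmk g x' y :=
  BT.mk_add_left x x' y

lemma tmk_add_right (x y y' : A) : tmk g x (y + y') = tmk g x y + tmk g x y' :=
  BT.mk_add_right x y y'

lemma tmk_bal (x : A) (b : B) (y : A) : tmk g (x * g b) y = tmk g x (g b * y) :=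
  BT.mk_bal b x y

/-- Lift a biadditive `B`-balanced map `A × A → P` to `Tsr g`. -/
def tlift (φ : A → A → P)
    (h1 : ∀ x x' y, φ (x + x') y = φ x y + φ x' y)
    (h2 : ∀ x y y', φ x (y + y') = φ x y + φ x y')
    (h3 : ∀ x b y, φ (x * g b) y = φ x (g b * y)) : Tsr g →+ P :=
  BT.lift _ _ φ h1 h2 (fun r m n => h3 m r n)

@[simp] lemma tlift_mk (φ : A → A → P) (h1 h2 h3) (x y : A) :
    tlift g φ h1 h2 h3 (tmk g x y) = φ x y :=
  BT.lift_mk φ h1 h2 _ x y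

lemma thom_ext {g : B →+* A} {f f' : Tsr g →+ P}
    (h : ∀ x y, f (tmk g x y) = f' (tmk g x y)) : f = f' :=
  BT.hom_ext h

/-- Left multiplication by `a ∈ A` on the first tensorand. -/
def lmul (a : A) : Tsr g →+ Tsr g :=
  tlift g (fun x y => tmk g (a * x) y)
    (fun x x' y => by rw [mul_add, tmk_add_left])
    (fun x y y' => by rw [tmk_add_right])
    (fun x b y => by rw [← mul_assoc, tmk_bal])

@[simp] lemma lmul_mk (a x y : A) : lmul g a (tmk g x y) = tmk g (a * x) y :=
  tlift_mk g _ _ _ _ x y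

/-- Right multiplication by `a ∈ A` on the second tensorand. -/
def rmul (a : A) : Tsr g →+ Tsr g :=
  tlift g (fun x y => tmk g x (y * a))
    (fun x x' y => by rw [tmk_add_left])
    (fun x y y' => by rw [add_mul, tmk_add_right])
    (fun x b y => by rw [tmk_bal, mul_assoc])

@[simp] lemma rmul_mk (a x y : A) : rmul g a (tmk g x y) = tmk g x (y * a) :=
  tlift_mk g _ _ _ _ x y

lemma lmul_lmul (a a' : A) (p : Tsr g) : lmul g a (lmul g a' p) = lmul g (a * a') p := by
  have : ((lmul g a).comp (lmul g a')) = lmul g (a * a') :=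
    thom_ext fun x y => by simp [mul_assoc]
  exact DFunLike.congr_fun this p

lemma rmul_rmul (a a' : A) (p : Tsr g) : rmul g a (rmul g a' p) = rmul g (a' * a) p := by
  have : ((rmul g a).comp (rmul g a')) = rmul g (a' * a) :=
    thom_ext fun x y => by simp [mul_assoc]
  exact DFunLike.congr_fun this p

lemma lmul_rmul (a a' : A) (p : Tsr g) : lmul g a (rmul g a' p) = rmul g a' (lmul g a p) := by
  have : ((lmul g a).comp (rmul g a')) = (rmul g a').comp (lmul g a) :=
    thom_ext fun x y => by simp
  exact DFunLike.congr_fun this p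

lemma lmul_add_smul (a a' : A) (p : Tsr g) :
    lmul g (a + a') p = lmul g a p + lmul g a' p := by
  have : lmul g (a + a') = lmul g a + lmul g a' :=
    thom_ext fun x y => by simp [add_mul, tmk_add_left]
  rw [this]; rfl

lemma rmul_add_smul (a a' : A) (p : Tsr g) :
    rmul g (a + a') p = rmul g a p + rmul g a' p := by
  have : rmul g (a + a') = rmul g a + rmul g a' :=
    thom_ext fun x y => by simp [mul_add, tmk_add_right]
  rw [this]; rfl

/-- The multiplication map `μ : A ⊗_B A → A`. -/
def mulmap : Tsr g →+ A :=
  tlift g (fun x y => x * y) (fun x x' y => by rw [add_mul])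
    (fun x y y' => by rw [mul_add]) (fun x b y => by rw [mul_assoc])

@[simp] lemma mulmap_mk (x y : A) : mulmap g (tmk g x y) = x * y := tlift_mk g _ _ _ _ x y

end Tsr

section TowerDefs

open Tsr

variable (g : B →+* A) (hC : C →+* A)

/-- `p ∈ (A ⊗_B A)^C` : the `C`-centralizer condition, where `C` maps to `A` via `hC`. -/
def TCent (p : Tsr g) : Prop := ∀ c : C, lmul g (hC c) p = rmul g (hC c) p

/-- `α ∈ End_B A_C` : additive endomorphisms of `A` that are left `B`-linear
(via `g`) and right `C`-linear (via `hC`). -/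
def EndBAC (α : A →+ A) : Prop :=
  (∀ (b : B) (x : A), α (g b * x) = g b * α x) ∧
  ∀ (x : A) (c : C), α (x * hC c) = α x * hC c

/-- The tower is right depth three: `A ⊗_B A` is isomorphic, as `A`-`C`-bimodules,
to a direct summand of `A^n` for some `n`. Here the left `A`-action and right
`C`-action on `A^n` are componentwise, and on `Tsr g` they are `lmul` and `rmul`. -/
def IsRightD3 : Prop :=
  ∃ (n : ℕ) (π : (Fin n → A) →+ Tsr g) (σ : Tsr g →+ (Fin n → A)),
    (∀ (a : A) (v : Fin n → A), π (fun i => a * v i) = lmul g a (π v)) ∧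
    (∀ (c : C) (v : Fin n → A), π (fun i => v i * hC c) = rmul g (hC c) (π v)) ∧
    (∀ (a : A) (p : Tsr g) (i : Fin n), σ (lmul g a p) i = a * σ p i) ∧
    (∀ (c : C) (p : Tsr g) (i : Fin n), σ (rmul g (hC c) p) i = σ p i * hC c) ∧
    (∀ p : Tsr g, π (σ p) = p)

end TowerDefs

end Tensor

open Tsr
section Extra

open Tsr

variable {C B A : Type*} [Ring C] [Ring B] [Ring A] (f : C →+* B) (g : B →+* A)

/-- For `γ` left `B`-linear, the map `A ⊗_B A → A`, `p = p¹ ⊗ p² ↦ p¹ * γ p²`. -/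
def phiMap (γ : A →+ A)
    (hγ : ∀ (b : B) (x : A), γ (g b * x) = g b * γ x) : Tsr g →+ A :=
  tlift g (fun x y => x * γ y)
    (fun x x' y => by rw [add_mul])
    (fun x y y' => by rw [map_add, mul_add])
    (fun x b y => by rw [hγ, mul_assoc])

/-- The centralizer `V = A^C` of the image of `C` in `A`. -/
def Vc : Subring A := Subring.centralizer (Set.range ⇑(g.comp f))

lemma Vc_comm {v : A} (hv : v ∈ Vc f g) (c : C) :
    (g.comp f) c * v = v * (g.comp f) c :=
  Subring.mem_centralizer_iff.mp hv _ ⟨c, rfl⟩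

/-- `P = (A ⊗_B A)^C` as an additive subgroup of `A ⊗_B A`. -/
def PCsub : AddSubgroup (Tsr g) where
  carrier := {p | TCent g (g.comp f) p}
  add_mem' := fun hp hq c => by simp only [map_add, hp c, hq c]
  zero_mem' := fun c => by simp
  neg_mem' := fun hp c => by simp only [map_neg, hp c]

lemma cent_lmul {v : A} (hv : ∀ c : C, (g.comp f) c * v = v * (g.comp f) c)
    {p : Tsr g} (hp : TCent g (g.comp f) p) :
    TCent g (g.comp f) (lmul g v p) := fun c => by
  rw [lmul_lmul, hv c, ← lmul_lmul, hp c, lmul_rmul]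

lemma cent_rmul {v : A} (hv : ∀ c : C, (g.comp f) c * v = v * (g.comp f) c)
    {p : Tsr g} (hp : TCent g (g.comp f) p) :
    TCent g (g.comp f) (rmul g v p) := fun c => by
  rw [lmul_rmul, hp c, rmul_rmul, hv c, ← rmul_rmul]

/-- The left action of `v ∈ V` on `P = (A ⊗_B A)^C`. -/
def smulL (v : Vc f g) : ↥(PCsub f g) →+ ↥(PCsub f g) :=
  AddMonoidHom.mk' (fun p => ⟨lmul g (v : A) p.1, cent_lmul f g (Vc_comm f g v.2) p.2⟩)
    (fun p q => Subtype.ext (by simp))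

/-- The right action of `v ∈ V` on `P = (A ⊗_B A)^C`. -/
def smulR (v : Vc f g) : ↥(PCsub f g) →+ ↥(PCsub f g) :=
  AddMonoidHom.mk' (fun p => ⟨rmul g (v : A) p.1, cent_rmul f g (Vc_comm f g v.2) p.2⟩)
    (fun p q => Subtype.ext (by simp))

end Extra

section Smash

open Tsr

variable {C B A : Type*} [Ring C] [Ring B] [Ring A] (f : C →+* B) (g : B →+* A)

/-- `End A_B` : right `B`-linear additive endomorphisms of `A`. -/
def EBsub (g : B →+* A) : AddSubgroup (A →+ A) where
  carrier := {α | ∀ (x : A) (b : B), α (x * g b) = α x * g b}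
  add_mem' := fun hα hα' x b => by
    simp only [AddMonoidHom.add_apply, hα x b, hα' x b, add_mul]
  zero_mem' := fun x b => by simp
  neg_mem' := fun hα x b => by
    simp only [AddMonoidHom.neg_apply, hα x b, neg_mul]

/-- `End_C A_B` : left `C`-linear, right `B`-linear additive endomorphisms of `A`. -/
def ECBsub (f : C →+* B) (g : B →+* A) : AddSubgroup (A →+ A) where
  carrier := {α | (∀ (c : C) (x : A), α ((g.comp f) c * x) = (g.comp f) c * α x) ∧
    ∀ (x : A) (b : B), α (x * g b) = α x * g b}
  add_mem' := fun hα hα' =>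
    ⟨fun c x => by simp only [AddMonoidHom.add_apply, hα.1 c x, hα'.1 c x, mul_add],
     fun x b => by simp only [AddMonoidHom.add_apply, hα.2 x b, hα'.2 x b, add_mul]⟩
  zero_mem' := ⟨fun c x => by simp, fun x b => by simp⟩
  neg_mem' := fun hα =>
    ⟨fun c x => by simp only [AddMonoidHom.neg_apply, hα.1 c x, mul_neg],
     fun x b => by simp only [AddMonoidHom.neg_apply, hα.2 x b, neg_mul]⟩

/-- The left action of `v ∈ V` on `End_C A_B`. -/
def vE (v : Vc f g) : ↥(ECBsub f g) →+ ↥(ECBsub f g) :=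
  AddMonoidHom.mk'
    (fun α => ⟨(AddMonoidHom.mulLeft (v : A)).comp α.1,
      ⟨fun c x => by
        simp only [AddMonoidHom.comp_apply, AddMonoidHom.coe_mulLeft, α.2.1 c x]
        rw [← mul_assoc, ← mul_assoc, Vc_comm f g v.2 c],
       fun x b => by
        simp only [AddMonoidHom.comp_apply, AddMonoidHom.coe_mulLeft, α.2.2 x b,
          mul_assoc]⟩⟩)
    (fun α α' => Subtype.ext (by ext x; simp [mul_add]))

/-- The tensor product `A ⊗_V End_C A_B`. -/
abbrev AVE (f : C →+* B) (g : B →+* A) : Type _ :=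
  BT (fun v : Vc f g => AddMonoidHom.mulRight (v : A)) (fun v : Vc f g => vE f g v)

/-- The map `A ⊗_V End_C A_B → End A_B`, `a ⊗ α ↦ λ_a ∘ α`. -/
def smashPhi : AVE f g →+ ↥(EBsub g) :=
  BT.lift _ _
    (fun a α => (⟨(AddMonoidHom.mulLeft a).comp α.1,
      fun x b => by
        simp only [AddMonoidHom.comp_apply, AddMonoidHom.coe_mulLeft, α.2.2 x b,
          mul_assoc]⟩ : ↥(EBsub g)))
    (fun a a' α => Subtype.ext (by ext x; simp [add_mul]))
    (fun a α α' => Subtype.ext (by ext x; simp [mul_add]))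
    (fun v a α => Subtype.ext (by ext x; simp [vE, mul_assoc]))

/-- For a right `B`-linear `F : A → A`, the map `A ⊗_B A → A`,
`t = t¹ ⊗ t² ↦ F(t¹) t²`. -/
def evMap (F : A →+ A) (hF : ∀ (x : A) (b : B), F (x * g b) = F x * g b) :
    Tsr g →+ A :=
  tlift g (fun x y => F x * y)
    (fun x x' y => by rw [map_add, add_mul])
    (fun x y y' => by rw [mul_add])
    (fun x b y => by rw [hF, mul_assoc])

end Smash


section Aux

open Tsr

variable {C B A : Type*} [Ring C] [Ring B] [Ring A] (f : C →+* B) (g : B →+* A)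

lemma BT.mk_zero_right {R M N : Type*} [AddCommGroup M] [AddCommGroup N]
    {rho : R → M →+ M} {lam : R → N →+ N} (m : M) :
    BT.mk rho lam m 0 = 0 := by
  have h := BT.mk_add_right (rho := rho) (lam := lam) m (0 : N) 0
  rw [add_zero] at h
  exact (left_eq_add.mp h)

lemma BT.mk_sum_right {R M N ι : Type*} [AddCommGroup M] [AddCommGroup N]
    {rho : R → M →+ M} {lam : R → N →+ N} (m : M) (s : Finset ι) (v : ι → N) :
    BT.mk rho lam m (∑ j ∈ s, v j) = ∑ j ∈ s, BT.mk rho lam m (v j) := by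
  classical
  induction s using Finset.induction_on with
  | empty => simpa using BT.mk_zero_right m
  | insert j s hj ih =>
      rw [Finset.sum_insert hj, Finset.sum_insert hj, BT.mk_add_right, ih]

@[simp] lemma evMap_mk (F : A →+ A) (hF : ∀ (x : A) (b : B), F (x * g b) = F x * g b)
    (x y : A) : evMap g F hF (tmk g x y) = F x * y :=
  tlift_mk g _ _ _ _ x y

lemma evMap_rmul (F : A →+ A) (hF : ∀ (x : A) (b : B), F (x * g b) = F x * g b)
    (a : A) (p : Tsr g) :
    evMap g F hF (rmul g a p) = evMap g F hF p * a := by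
  have h : (evMap g F hF).comp (rmul g a)
      = (AddMonoidHom.mulRight a).comp (evMap g F hF) :=
    thom_ext fun x y => by simp [mul_assoc]
  exact DFunLike.congr_fun h p

lemma evMap_lmulC (α : A →+ A)
    (hα1 : ∀ (c : C) (x : A), α ((g.comp f) c * x) = (g.comp f) c * α x)
    (hα2 : ∀ (x : A) (b : B), α (x * g b) = α x * g b)
    (c : C) (p : Tsr g) :
    evMap g α hα2 (lmul g ((g.comp f) c) p) = (g.comp f) c * evMap g α hα2 p := by
  have h : (evMap g α hα2).comp (lmul g ((g.comp f) c))
      = (AddMonoidHom.mulLeft ((g.comp f) c)).comp (evMap g α hα2) :=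
    thom_ext fun x y => by
      simp only [AddMonoidHom.comp_apply, AddMonoidHom.coe_mulLeft, lmul_mk, evMap_mk,
        hα1, mul_assoc]
  exact DFunLike.congr_fun h p

lemma evMap_comp_mulLeft (a : A) (α : A →+ A)
    (hα2 : ∀ (x : A) (b : B), α (x * g b) = α x * g b)
    (hF : ∀ (x : A) (b : B), ((AddMonoidHom.mulLeft a).comp α) (x * g b)
      = ((AddMonoidHom.mulLeft a).comp α) x * g b)
    (p : Tsr g) :
    evMap g ((AddMonoidHom.mulLeft a).comp α) hF p = a * evMap g α hα2 p := by
  have h : evMap g ((AddMonoidHom.mulLeft a).comp α) hF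
      = (AddMonoidHom.mulLeft a).comp (evMap g α hα2) :=
    thom_ext fun x y => by simp [mul_assoc]
  rw [h]; rfl

lemma evMap_hom_add (F G : A →+ A)
    (hF : ∀ (x : A) (b : B), F (x * g b) = F x * g b)
    (hG : ∀ (x : A) (b : B), G (x * g b) = G x * g b)
    (hFG : ∀ (x : A) (b : B), (F + G) (x * g b) = (F + G) x * g b)
    (p : Tsr g) :
    evMap g (F + G) hFG p = evMap g F hF p + evMap g G hG p := by
  have h : evMap g (F + G) hFG = evMap g F hF + evMap g G hG :=
    thom_ext fun x y => by simp [add_mul]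
  rw [h]; rfl

end Aux


/-- Let `A|B|C` be a left depth three tower with left D3
quasibases `β_j ∈ End_C A_B`, `t_j ∈ (A ⊗_B A)^C` satisfying
`x ⊗_B y = ∑ j t_j β_j(x) y`.  Then `a ⊗ α ↦ λ_a ∘ α` is an isomorphism of
abelian groups `A ⊗_V End_C A_B ≅ End A_B`, with inverse
`F ↦ ∑ j F(t_j¹) t_j² ⊗_V β_j`. -/
theorem smash_product_endomorphism_ring {C B A : Type*} [Ring C] [Ring B] [Ring A]
    (f : C →+* B) (g : B →+* A) (n : ℕ) (β : Fin n → (A →+ A)) (t : Fin n → Tsr g)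
    (hβ : ∀ j, β j ∈ ECBsub f g) (ht : ∀ j, TCent g (g.comp f) (t j))
    (hqb : ∀ x y : A, tmk g x y = ∑ j, rmul g (β j x * y) (t j)) :
    Function.Bijective ⇑(smashPhi f g) ∧
    ∀ F : ↥(EBsub g),
      smashPhi f g (∑ j, BT.mk _ _ (evMap g F.1 F.2 (t j))
        (⟨β j, hβ j⟩ : ↥(ECBsub f g))) = F := by
  classical
  -- key identity: F x = ∑ j, evMap F (t j) * β j x
  have key1 : ∀ (F : A →+ A) (hF : ∀ (x : A) (b : B), F (x * g b) = F x * g b) (x : A),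
      F x = ∑ j, evMap g F hF (t j) * β j x := by
    intro F hF x
    have h := congrArg (evMap g F hF) (hqb x 1)
    rw [map_sum] at h
    simpa [evMap_rmul, mul_one] using h
  -- part 2
  have part2 : ∀ F : ↥(EBsub g),
      smashPhi f g (∑ j, BT.mk _ _ (evMap g F.1 F.2 (t j))
        (⟨β j, hβ j⟩ : ↥(ECBsub f g))) = F := by
    intro F
    rw [map_sum]
    refine Subtype.ext (AddMonoidHom.ext fun x => ?_)
    have hcoe : ((∑ j, smashPhi f g (BT.mk _ _ (evMap g F.1 F.2 (t j))
        (⟨β j, hβ j⟩ : ↥(ECBsub f g))) : ↥(EBsub g)) : A →+ A) x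
        = ∑ j, ((smashPhi f g (BT.mk _ _ (evMap g F.1 F.2 (t j))
        (⟨β j, hβ j⟩ : ↥(ECBsub f g))) : ↥(EBsub g)) : A →+ A) x := by
      simp
    rw [hcoe]
    rw [key1 F.1 F.2 x]
    refine Finset.sum_congr rfl fun j _ => ?_
    simp [smashPhi, BT.lift_mk]
  -- the inverse map, as an additive homomorphism
  set Ψ : ↥(EBsub g) →+ AVE f g := AddMonoidHom.mk'
    (fun F => ∑ j, BT.mk _ _ (evMap g F.1 F.2 (t j))
      (⟨β j, hβ j⟩ : ↥(ECBsub f g)))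
    (fun F G => by
      rw [← Finset.sum_add_distrib]
      refine Finset.sum_congr rfl fun j _ => ?_
      have he : evMap g ((F + G : ↥(EBsub g)) : A →+ A) (F + G).2 (t j)
          = evMap g F.1 F.2 (t j) + evMap g G.1 G.2 (t j) :=
        evMap_hom_add g F.1 G.1 F.2 G.2 (F + G).2 (t j)
      rw [he, BT.mk_add_left]) with hΨdef
  have hΨ : ∀ F : ↥(EBsub g),
      Ψ F = ∑ j, BT.mk _ _ (evMap g F.1 F.2 (t j))
        (⟨β j, hβ j⟩ : ↥(ECBsub f g)) := fun F => rfl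
  -- left inverse property
  have hLI : ∀ z : AVE f g, Ψ (smashPhi f g z) = z := by
    intro z
    refine BT.ind (motive := fun z => Ψ (smashPhi f g z) = z) ?_ ?_ ?_ ?_ z
    · show Ψ (smashPhi f g 0) = 0
      rw [map_zero, map_zero]
    · intro a α
      have hφ : smashPhi f g (BT.mk _ _ a α)
          = (⟨(AddMonoidHom.mulLeft a).comp α.1,
              fun x b => by
                simp only [AddMonoidHom.comp_apply, AddMonoidHom.coe_mulLeft, α.2.2 x b,
                  mul_assoc]⟩ : ↥(EBsub g)) := BT.lift_mk _ _ _ _ a α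
      rw [hφ, hΨ]
      have hu : ∀ j, evMap g α.1 α.2.2 (t j) ∈ Vc f g := by
        intro j
        rw [Vc, Subring.mem_centralizer_iff]
        rintro _ ⟨c, rfl⟩
        rw [← evMap_lmulC f g α.1 α.2.1 α.2.2 c (t j), ← evMap_rmul g α.1 α.2.2, ht j c]
      have hstep : ∀ j, BT.mk (fun v : Vc f g => AddMonoidHom.mulRight (v : A))
            (fun v : Vc f g => vE f g v)
            (evMap g ((AddMonoidHom.mulLeft a).comp α.1)
              (fun x b => by
                simp only [AddMonoidHom.comp_apply, AddMonoidHom.coe_mulLeft, α.2.2 x b,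
                  mul_assoc]) (t j))
            (⟨β j, hβ j⟩ : ↥(ECBsub f g))
          = BT.mk _ _ a
              (vE f g ⟨evMap g α.1 α.2.2 (t j), hu j⟩ (⟨β j, hβ j⟩ : ↥(ECBsub f g))) := by
        intro j
        rw [evMap_comp_mulLeft g a α.1 α.2.2]
        have hb := BT.mk_bal (rho := fun v : Vc f g => AddMonoidHom.mulRight (v : A))
          (lam := fun v : Vc f g => vE f g v)
          ⟨evMap g α.1 α.2.2 (t j), hu j⟩ a (⟨β j, hβ j⟩ : ↥(ECBsub f g))
        simpa using hb
      calc (∑ j, BT.mk _ _ (evMap g ((AddMonoidHom.mulLeft a).comp α.1) _ (t j))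
              (⟨β j, hβ j⟩ : ↥(ECBsub f g)))
          = ∑ j, BT.mk _ _ a
              (vE f g ⟨evMap g α.1 α.2.2 (t j), hu j⟩
                (⟨β j, hβ j⟩ : ↥(ECBsub f g))) := Finset.sum_congr rfl fun j _ => hstep j
        _ = BT.mk _ _ a (∑ j, vE f g ⟨evMap g α.1 α.2.2 (t j), hu j⟩
              (⟨β j, hβ j⟩ : ↥(ECBsub f g))) := (BT.mk_sum_right a _ _).symm
        _ = BT.mk _ _ a α := by
              congr 1
              refine Subtype.ext (AddMonoidHom.ext fun x => ?_)
              have hc : ((∑ j, vE f g ⟨evMap g α.1 α.2.2 (t j), hu j⟩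
                  (⟨β j, hβ j⟩ : ↥(ECBsub f g)) : ↥(ECBsub f g)) : A →+ A) x
                  = ∑ j, evMap g α.1 α.2.2 (t j) * β j x := by
                simp [vE]
              rw [hc]
              exact (key1 α.1 α.2.2 x).symm
    · intro x hx
      show Ψ (smashPhi f g (-x)) = -x
      rw [map_neg, map_neg, hx]
    · intro x y hx hy
      show Ψ (smashPhi f g (x + y)) = x + y
      rw [map_add, map_add, hx, hy]
  refine ⟨⟨fun z w h => by rw [← hLI z, ← hLI w, h], fun F => ⟨Ψ F, by rw [hΨ]; exact part2 F⟩⟩,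
    part2⟩
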